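/- Under the two-solution setup, for each pair (i, j) with {i, j} = {1, 2}, the real number (2·L_{m_i})^{k_j}·2^{−k_i}·α^{−(k_j·n_i − k_i·(n_j + m_j))} is different from 1; equivalently, (2·L_{m_i})^{k_j} ≠ 2^{k_i}·α^{k_j·n_i − k_i·(n_j + m_j)}, where the exponent k_j·n_i − k_i·(n_j + m_j) is an integer. -/

import Mathlib

/-- The Lucas numbers: L₀ = 2, L₁ = 1, L_{n+2} = L_{n+1} + L_n. -/
def lucas : ℕ → ℕ
  | 0 => 2
  | 1 => 1
  | n + 2 => lucas (n + 1) + lucas n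

/-- The golden ratio α = (1 + √5)/2. -/
noncomputable def alpha : ℝ := (1 + Real.sqrt 5) / 2

noncomputable def betaGR : ℝ := (1 - Real.sqrt 5) / 2

lemma lucas_pos : ∀ n, 0 < lucas n
  | 0 => by decide
  | 1 => by decide
  | n + 2 => by
      have := lucas_pos n
      have := lucas_pos (n+1)
      show 0 < lucas (n+1) + lucas n
      omega

lemma sqrt5_sq : Real.sqrt 5 ^ 2 = 5 := Real.sq_sqrt (by norm_num)

lemma alpha_sq : alpha ^ 2 = alpha + 1 := by
  unfold alpha; nlinarith [sqrt5_sq]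

lemma betaGR_sq : betaGR ^ 2 = betaGR + 1 := by
  unfold betaGR; nlinarith [sqrt5_sq]

lemma alpha_mul_betaGR : alpha * betaGR = -1 := by
  unfold alpha betaGR; nlinarith [sqrt5_sq]

lemma alpha_pos : 0 < alpha := by
  unfold alpha
  have : 0 ≤ Real.sqrt 5 := Real.sqrt_nonneg 5
  linarith

lemma alpha_inv : alpha⁻¹ = alpha - 1 := by
  have h : alpha * (alpha - 1) = 1 := by nlinarith [alpha_sq]
  exact inv_eq_of_mul_eq_one_right h

lemma alpha_irrational : Irrational alpha := by
  have h5 : Irrational (Real.sqrt 5) := (by norm_num : Nat.Prime 5).irrational_sqrt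
  have : Irrational ((1 : ℤ) + Real.sqrt 5) := h5.intCast_add 1
  have h2 := this.div_intCast (m := 2) (by norm_num)
  simpa [alpha] using h2

lemma binet : ∀ n, (lucas n : ℝ) = alpha ^ n + betaGR ^ n
  | 0 => by norm_num [lucas]
  | 1 => by
      show ((1:ℕ) : ℝ) = _
      unfold alpha betaGR; push_cast; ring
  | n + 2 => by
      have h1 := binet n
      have h2 := binet (n+1)
      show ((lucas (n+1) + lucas n : ℕ) : ℝ) = alpha ^ (n+2) + betaGR ^ (n+2)
      push_cast
      rw [h1, h2]
      have ha : alpha ^ (n+2) = alpha ^ n * alpha ^ 2 := by ring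
      have hb : betaGR ^ (n+2) = betaGR ^ n * betaGR ^ 2 := by ring
      rw [ha, hb, alpha_sq, betaGR_sq]
      ring

lemma lucas_three (n : ℕ) :
    (lucas (3 * n) : ℤ) = (lucas n : ℤ) ^ 3 - 3 * (-1) ^ n * lucas n := by
  have key : ((lucas (3 * n) : ℤ) : ℝ) = (((lucas n : ℤ) ^ 3 - 3 * (-1) ^ n * lucas n : ℤ) : ℝ) := by
    push_cast
    rw [binet, binet]
    have h1 : alpha ^ (3 * n) = (alpha ^ n) ^ 3 := by rw [mul_comm 3 n, pow_mul]
    have h2 : betaGR ^ (3 * n) = (betaGR ^ n) ^ 3 := by rw [mul_comm 3 n, pow_mul]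
    have h3 : (-1 : ℝ) ^ n = alpha ^ n * betaGR ^ n := by
      rw [← mul_pow, alpha_mul_betaGR]
    rw [h1, h2, h3]
    ring
  exact_mod_cast key

lemma lucas_mod8_per : ∀ n, lucas (n + 12) % 8 = lucas n % 8
  | 0 => by decide
  | 1 => by decide
  | n + 2 => by
      have h1 := lucas_mod8_per n
      have h2 := lucas_mod8_per (n + 1)
      show (lucas (n + 1 + 12) + lucas (n + 12)) % 8 = (lucas (n+1) + lucas n) % 8
      omega

lemma lucas_mod8 (n : ℕ) : lucas n % 8 ≠ 0 := by
  induction n using Nat.strong_induction_on with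
  | _ n ih =>
    rcases Nat.lt_or_ge n 12 with h | h
    · interval_cases n <;> decide
    · obtain ⟨m, rfl⟩ : ∃ m, n = m + 12 := ⟨n - 12, by omega⟩
      rw [lucas_mod8_per]
      exact ih m (by omega)

lemma alpha_pow_nat : ∀ n : ℕ, ∃ a b : ℤ, 0 ≤ a ∧ 1 ≤ b ∧ alpha ^ (n + 1) = a + b * alpha
  | 0 => ⟨0, 1, le_refl _, le_refl _, by norm_num⟩
  | n + 1 => by
      obtain ⟨a, b, ha, hb, h⟩ := alpha_pow_nat n
      refine ⟨b, a + b, by omega, by omega, ?_⟩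
      have : alpha ^ (n + 2) = alpha ^ (n + 1) * alpha := by ring
      rw [this, h]
      push_cast
      linear_combination (b : ℝ) * alpha_sq

lemma alpha_pow_neg : ∀ n : ℕ, ∃ a b : ℤ, a * b < 0 ∧ alpha ^ (-(n + 1 : ℤ)) = a + b * alpha
  | 0 => by
      refine ⟨-1, 1, by norm_num, ?_⟩
      rw [show (-((0:ℕ) + 1 : ℤ)) = -1 by norm_num, zpow_neg_one, alpha_inv]
      push_cast; ring
  | n + 1 => by
      obtain ⟨a, b, hab, h⟩ := alpha_pow_neg n
      refine ⟨b - a, a, by nlinarith [sq_nonneg a], ?_⟩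
      have hstep : alpha ^ (-(n + 1 + 1 : ℤ)) = alpha ^ (-(n + 1 : ℤ)) * alpha⁻¹ := by
        rw [← zpow_neg_one, ← zpow_add₀ (ne_of_gt alpha_pos)]
        ring_nf
      push_cast
      push_cast at hstep h
      rw [hstep, h, alpha_inv]
      linear_combination (b : ℝ) * alpha_sq

lemma alpha_zpow_irrational (E : ℤ) (hE : E ≠ 0) : Irrational (alpha ^ E) := by
  have key : ∃ a b : ℤ, b ≠ 0 ∧ alpha ^ E = a + b * alpha := by
    rcases lt_or_gt_of_ne hE with h | h
    · obtain ⟨n, hn⟩ : ∃ n : ℕ, E = -(n + 1 : ℤ) := ⟨(-E - 1).toNat, by omega⟩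
      obtain ⟨a, b, hab, hh⟩ := alpha_pow_neg n
      exact ⟨a, b, by rintro rfl; simp at hab, by rw [hn]; exact hh⟩
    · obtain ⟨n, hn⟩ : ∃ n : ℕ, E = (n : ℤ) + 1 := ⟨(E - 1).toNat, by omega⟩
      obtain ⟨a, b, _, hb, hh⟩ := alpha_pow_nat n
      refine ⟨a, b, by omega, ?_⟩
      rw [hn]
      rw [show ((n : ℤ) + 1) = ((n + 1 : ℕ) : ℤ) by push_cast; ring, zpow_natCast]
      exact hh
  obtain ⟨a, b, hb, h⟩ := key
  rw [h]
  exact ((alpha_irrational.intCast_mul hb).intCast_add a)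

lemma nat_ne_irr (c : ℕ) (k : ℕ) (E : ℤ) (hE : E ≠ 0) :
    ((c : ℕ) : ℝ) ≠ (2:ℝ) ^ k * alpha ^ E := by
  intro h
  have hirr : Irrational ((2:ℝ) ^ k * alpha ^ E) := by
    have h2 := (alpha_zpow_irrational E hE).intCast_mul (m := 2 ^ k) (by positivity)
    have h3 : (((2:ℤ) ^ k : ℤ) : ℝ) = (2:ℝ) ^ k := by push_cast; ring
    rwa [h3] at h2
  rw [← h] at hirr
  exact Nat.not_irrational c hirr

lemma cubic_contra (A B e s : ℤ) (hA : 1 ≤ A) (hB : 1 ≤ B)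
    (he : e = 1 ∨ e = -1) (hs : s = 1 ∨ s = -1)
    (h : 4 * (B ^ 3 - 3 * s * B) = 4 * A ^ 3 - 3 * e * A) : False := by
  rcases lt_trichotomy A B with hlt | heq | hlt
  · have hba : A + 1 ≤ B := hlt
    have t1 : 1 * (B^2 + A*B + A^2) ≤ (B - A) * (B^2 + A*B + A^2) := by
      apply mul_le_mul_of_nonneg_right (by omega)
      nlinarith [sq_nonneg (A + B), sq_nonneg (A - B)]
    have t2 : 1 * B ≤ A * B := mul_le_mul_of_nonneg_right hA (by omega)
    have t3 : 1 * A ≤ A * A := mul_le_mul_of_nonneg_right hA (by omega)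
    rcases he with rfl | rfl <;> rcases hs with rfl | rfl <;> nlinarith [t1, t2, t3]
  · subst heq
    rcases he with rfl | rfl <;> rcases hs with rfl | rfl <;> linarith
  · have hba : B + 1 ≤ A := hlt
    have t1 : 1 * (B^2 + A*B + A^2) ≤ (A - B) * (B^2 + A*B + A^2) := by
      apply mul_le_mul_of_nonneg_right (by omega)
      nlinarith [sq_nonneg (A + B), sq_nonneg (A - B)]
    have t2 : 1 * A ≤ B * A := mul_le_mul_of_nonneg_right hB (by omega)
    have t3 : 1 * B ≤ B * B := mul_le_mul_of_nonneg_right hB (by omega)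
    rcases he with rfl | rfl <;> rcases hs with rfl | rfl <;> nlinarith [t1, t2, t3]

theorem stmt_16
    (d x1 y1 : ℕ) (ε : ℤ) (δ η : ℝ) (X : ℕ → ℝ)
    (hd : 2 ≤ d) (hdsf : Squarefree d)
    (hx1 : 1 ≤ x1) (hy1 : 1 ≤ y1)
    (hε : (x1 : ℤ) ^ 2 - (d : ℤ) * (y1 : ℤ) ^ 2 = ε)
    (hεpm : ε = 1 ∨ ε = -1)
    (hmin : ∀ x y : ℕ, 1 ≤ x → 1 ≤ y →
      ((x : ℤ) ^ 2 - (d : ℤ) * (y : ℤ) ^ 2 = 1 ∨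
        (x : ℤ) ^ 2 - (d : ℤ) * (y : ℤ) ^ 2 = -1) → x1 ≤ x)
    (hδ : δ = (x1 : ℝ) + (y1 : ℝ) * Real.sqrt d)
    (hη : η = (x1 : ℝ) - (y1 : ℝ) * Real.sqrt d)
    (hX : ∀ k : ℕ, X k = (δ ^ k + η ^ k) / 2)
    (k1 n1 m1 k2 n2 m2 : ℕ)
    (hk1 : 1 ≤ k1) (hk2 : 1 ≤ k2) (hk12 : k1 < k2)
    (hnm1 : m1 ≤ n1) (hnm2 : m2 ≤ n2)
    (hsol1 : X k1 = ((lucas n1 * lucas m1 : ℕ) : ℝ))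
    (hsol2 : X k2 = ((lucas n2 * lucas m2 : ℕ) : ℝ)) :
    ((2 * lucas m1 : ℕ) : ℝ) ^ k2 ≠
      (2 : ℝ) ^ k1 * alpha ^ ((k2 : ℤ) * (n1 : ℤ) - (k1 : ℤ) * ((n2 : ℤ) + (m2 : ℤ))) ∧
    ((2 * lucas m2 : ℕ) : ℝ) ^ k1 ≠
      (2 : ℝ) ^ k2 * alpha ^ ((k1 : ℤ) * (n2 : ℤ) - (k2 : ℤ) * ((n1 : ℤ) + (m1 : ℤ))) := by
  have hsd : Real.sqrt d ^ 2 = (d : ℝ) := Real.sq_sqrt (by positivity)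
  have hε' : ((x1:ℝ))^2 - (d:ℝ)*((y1:ℝ))^2 = (ε:ℝ) := by exact_mod_cast hε
  have hde : δ * η = (ε : ℝ) := by
    rw [hδ, hη]
    linear_combination hε' - (y1:ℝ)^2 * hsd
  have heps : ε ^ k1 = 1 ∨ ε ^ k1 = -1 := by
    rcases hεpm with h | h <;> rw [h]
    · left; simp
    · rcases Nat.even_or_odd k1 with he | ho
      · left; exact he.neg_one_pow
      · right; exact ho.neg_one_pow
  constructor
  · intro heq
    set E : ℤ := (k2 : ℤ) * (n1 : ℤ) - (k1 : ℤ) * ((n2 : ℤ) + (m2 : ℤ)) with hEdef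
    by_cases hE : E = 0
    · rw [hE, zpow_zero, mul_one] at heq
      have hnat : (2 * lucas m1) ^ k2 = 2 ^ k1 := by exact_mod_cast heq
      have h1 : 2 ^ k2 ≤ (2 * lucas m1) ^ k2 :=
        Nat.pow_le_pow_left (by have := lucas_pos m1; omega) _
      have h2 : 2 ^ k1 < 2 ^ k2 := Nat.pow_lt_pow_right (by norm_num) hk12
      omega
    · exact nat_ne_irr ((2 * lucas m1) ^ k2) k1 E hE (by push_cast; push_cast at heq; exact heq)
  · intro heq
    set E : ℤ := (k1 : ℤ) * (n2 : ℤ) - (k2 : ℤ) * ((n1 : ℤ) + (m1 : ℤ)) with hEdef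
    by_cases hE : E = 0
    · rw [hE, zpow_zero, mul_one] at heq
      have hnat : (2 * lucas m2) ^ k1 = 2 ^ k2 := by exact_mod_cast heq
      have hsplit : 2 ^ k1 * lucas m2 ^ k1 = 2 ^ k2 := by rw [← mul_pow]; exact hnat
      have hpow : lucas m2 ^ k1 = 2 ^ (k2 - k1) := by
        have h2 : (2:ℕ) ^ k2 = 2 ^ k1 * 2 ^ (k2 - k1) := by rw [← pow_add]; congr 1; omega
        rw [h2] at hsplit
        exact Nat.eq_of_mul_eq_mul_left (by positivity) hsplit
      have hdvd : lucas m2 ∣ 2 ^ (k2 - k1) := by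
        rw [← hpow]; exact dvd_pow_self _ (by omega)
      obtain ⟨t, ht, hLt⟩ := (Nat.dvd_prime_pow Nat.prime_two).mp hdvd
      have hexp : t * k1 = k2 - k1 := by
        have h3 : (2:ℕ) ^ (t * k1) = 2 ^ (k2 - k1) := by rw [pow_mul, ← hLt]; exact hpow
        exact Nat.pow_right_injective (le_refl 2) h3
      have ht3 : t < 3 := by
        by_contra hcon
        obtain ⟨c, hc⟩ : (8:ℕ) ∣ lucas m2 := by
          rw [hLt]
          exact (show (8:ℕ) = 2^3 by norm_num) ▸ pow_dvd_pow 2 (by omega)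
        exact lucas_mod8 m2 (by omega)
      interval_cases t
      · -- t = 0: k2 = k1 contradiction
        omega
      · -- t = 1: lucas m2 = 2, k2 = 2*k1, parity contradiction
        have hk2eq : k2 = 2 * k1 := by omega
        have hL2 : lucas m2 = 2 := by simpa using hLt
        have hX2 : X (2 * k1) = 2 * (X k1)^2 - ((ε:ℝ)) ^ k1 := by
          rw [hX, hX]
          rw [show 2 * k1 = k1 * 2 by ring, pow_mul, pow_mul]
          rw [show ((ε:ℝ)) ^ k1 = δ ^ k1 * η ^ k1 by rw [← mul_pow, hde]]
          ring
        rw [← hk2eq, hsol2, hsol1, hL2] at hX2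
        have hint : (ε ^ k1 : ℤ) =
            2 * ((lucas n1 : ℤ) * (lucas m1 : ℤ))^2 - 2 * (lucas n2 : ℤ) := by
          have hcast : ((ε ^ k1 : ℤ) : ℝ) =
              ((2 * ((lucas n1 : ℤ) * (lucas m1 : ℤ))^2 - 2 * (lucas n2 : ℤ) : ℤ) : ℝ) := by
            push_cast
            push_cast at hX2
            linarith
          exact_mod_cast hcast
        have hdvd2 : (2:ℤ) ∣ ε ^ k1 :=
          ⟨((lucas n1 : ℤ) * (lucas m1 : ℤ))^2 - (lucas n2 : ℤ), by linarith⟩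
        rcases heps with h | h <;> rw [h] at hdvd2 <;> norm_num at hdvd2
      · -- t = 2: lucas m2 = 4, k2 = 3*k1, cubic contradiction
        have hk2eq : k2 = 3 * k1 := by omega
        have hL4 : lucas m2 = 4 := by rw [hLt]; norm_num
        have hX3 : X (3 * k1) = 4 * (X k1)^3 - 3 * ((ε:ℝ)) ^ k1 * X k1 := by
          rw [hX, hX]
          rw [show 3 * k1 = k1 * 3 by ring, pow_mul, pow_mul]
          rw [show ((ε:ℝ)) ^ k1 = δ ^ k1 * η ^ k1 by rw [← mul_pow, hde]]
          ring
        rw [← hk2eq, hsol2, hsol1, hL4] at hX3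
        have hEnat : k1 * n2 = k2 * (n1 + m1) := by
          have hz : (k1:ℤ) * (n2:ℤ) = (k2:ℤ) * ((n1:ℤ) + (m1:ℤ)) := by
            have := hE
            rw [hEdef] at this
            linarith [this]
          exact_mod_cast hz
        have hn2 : n2 = 3 * (n1 + m1) := by
          have h' : k1 * n2 = k1 * (3 * (n1 + m1)) := by rw [hEnat, hk2eq]; ring
          exact Nat.eq_of_mul_eq_mul_left (by omega) h'
        have hint : 4 * (lucas n2 : ℤ) =
            4 * ((lucas n1 : ℤ) * (lucas m1 : ℤ))^3
              - 3 * (ε ^ k1) * ((lucas n1 : ℤ) * (lucas m1 : ℤ)) := by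
          have hcast : ((4 * (lucas n2 : ℤ) : ℤ) : ℝ) =
              ((4 * ((lucas n1 : ℤ) * (lucas m1 : ℤ))^3
                - 3 * (ε ^ k1) * ((lucas n1 : ℤ) * (lucas m1 : ℤ)) : ℤ) : ℝ) := by
            push_cast
            push_cast at hX3
            linarith
          exact_mod_cast hcast
        have hLuc := lucas_three (n1 + m1)
        rw [hn2] at hint
        have hsig : ((-1:ℤ)) ^ (n1 + m1) = 1 ∨ ((-1:ℤ)) ^ (n1 + m1) = -1 := by
          rcases Nat.even_or_odd (n1 + m1) with he | ho
          · left; exact he.neg_one_pow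
          · right; exact ho.neg_one_pow
        have hApos : 1 ≤ lucas n1 * lucas m1 := Nat.mul_pos (lucas_pos n1) (lucas_pos m1)
        have hA : (1:ℤ) ≤ (lucas n1 : ℤ) * (lucas m1 : ℤ) := by exact_mod_cast hApos
        have hB : (1:ℤ) ≤ (lucas (n1 + m1) : ℤ) := by exact_mod_cast lucas_pos (n1 + m1)
        refine cubic_contra ((lucas n1 : ℤ) * (lucas m1 : ℤ)) (lucas (n1 + m1) : ℤ)
          (ε ^ k1) (((-1:ℤ)) ^ (n1 + m1)) hA hB heps hsig ?_
        rw [hLuc] at hint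
        linarith
    · exact nat_ne_irr ((2 * lucas m2) ^ k1) k2 E hE (by push_cast; push_cast at heq; exact heq)
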